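/- For the permutation action of C_5 on the degree-5 del Pezzo surface M̄_{0,5}, the invariant β(M̄_{0,5} ⟲ C_5) vanishes in B_2(C_5): the sum β_1 + β_2 + (β_1-β_2) + (2β_2-β_1) + (β_2-β_1) + (β_1-2β_2) + (-β_2) + (-β_1) equals 0, where β_1 = [1,1] and β_2 = [1,2]. -/

import Mathlib

open FreeAbelianGroup

/-- A multiset of characters generates the character group. -/
def Adm {A : Type} [AddCommGroup A] (s : Multiset A) : Prop :=
  AddSubgroup.closure {x | x ∈ s} = ⊤

/-- Admissible symbols: multisets of `n` characters generating `A`. -/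
def Symb (A : Type) [AddCommGroup A] (n : ℕ) : Type :=
  {s : Multiset A // Multiset.card s = n ∧ Adm s}

/-- The blow-up relations (B₂). -/
def blowupRels (A : Type) [AddCommGroup A] (n : ℕ) :
    Set (FreeAbelianGroup (Symb A n)) :=
  {x | ∃ (a b : A) (t : Multiset A)
      (h : Multiset.card (a ::ₘ b ::ₘ t) = n ∧ Adm (a ::ₘ b ::ₘ t))
      (h1 : Multiset.card (a ::ₘ (b - a) ::ₘ t) = n ∧ Adm (a ::ₘ (b - a) ::ₘ t))
      (h2 : Multiset.card ((a - b) ::ₘ b ::ₘ t) = n ∧ Adm ((a - b) ::ₘ b ::ₘ t)),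
      a ≠ b ∧
      x = of (⟨a ::ₘ b ::ₘ t, h⟩ : Symb A n) - of ⟨a ::ₘ (b - a) ::ₘ t, h1⟩
            - of ⟨(a - b) ::ₘ b ::ₘ t, h2⟩} ∪
  {x | ∃ (a : A) (t : Multiset A)
      (h : Multiset.card (a ::ₘ a ::ₘ t) = n ∧ Adm (a ::ₘ a ::ₘ t))
      (h0 : Multiset.card ((0 : A) ::ₘ a ::ₘ t) = n ∧ Adm ((0 : A) ::ₘ a ::ₘ t)),
      x = of (⟨a ::ₘ a ::ₘ t, h⟩ : Symb A n) - of ⟨(0 : A) ::ₘ a ::ₘ t, h0⟩}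

/-- The group of equivariant birational types `𝓑ₙ(G)`, for `A = G^∨`. -/
def B (A : Type) [AddCommGroup A] (n : ℕ) : Type :=
  FreeAbelianGroup (Symb A n) ⧸ AddSubgroup.closure (blowupRels A n)

instance (A : Type) [AddCommGroup A] (n : ℕ) : AddCommGroup (B A n) := by
  unfold B; infer_instance

/-- The class of a symbol in `𝓑ₙ(G)`. -/
def symb {A : Type} [AddCommGroup A] {n : ℕ} (s : Multiset A)
    (h : Multiset.card s = n ∧ Adm s) : B A n :=
  QuotientAddGroup.mk (of (⟨s, h⟩ : Symb A n))

lemma adm_of_unit {N : ℕ} [NeZero N] {s : Multiset (ZMod N)} {u : ZMod N}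
    (hu : u ∈ s) (h : IsUnit u) : Adm s := by
  rw [Adm, AddSubgroup.eq_top_iff']
  intro x
  have hu' : u ∈ AddSubgroup.closure {y | y ∈ s} := AddSubgroup.subset_closure hu
  obtain ⟨v, hv⟩ := h.exists_left_inv
  have hx : x = (x * v).val • u := by
    rw [nsmul_eq_mul, ZMod.natCast_val, ZMod.cast_id, mul_assoc, hv, mul_one]
  rw [hx]
  exact AddSubgroup.nsmul_mem _ hu' _

lemma admU {N : ℕ} [NeZero N] {s : Multiset (ZMod N)} {u v : ZMod N}
    (hu : u ∈ s) (huv : u * v = 1) : Adm s :=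
  adm_of_unit hu (IsUnit.of_mul_eq_one _ huv)

/-- The symbol `[a,b]` in `B₂(C₅)`. -/
def c5 (a b : ZMod 5) (u v : ZMod 5) (hu : u ∈ ({a, b} : Multiset (ZMod 5)))
    (huv : u * v = 1) : B (ZMod 5) 2 :=
  symb {a, b} ⟨by simp, admU hu huv⟩

lemma symb_congr {A : Type} [AddCommGroup A] {n : ℕ} {s s' : Multiset A} (e : s = s')
    (h : Multiset.card s = n ∧ Adm s) (h' : Multiset.card s' = n ∧ Adm s') :
    symb s h = symb s' h' := by subst e; rfl

lemma rel1 {A : Type} [AddCommGroup A] {n : ℕ} (a b : A) (t : Multiset A) (hab : a ≠ b)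
    (h : Multiset.card (a ::ₘ b ::ₘ t) = n ∧ Adm (a ::ₘ b ::ₘ t))
    (h1 : Multiset.card (a ::ₘ (b - a) ::ₘ t) = n ∧ Adm (a ::ₘ (b - a) ::ₘ t))
    (h2 : Multiset.card ((a - b) ::ₘ b ::ₘ t) = n ∧ Adm ((a - b) ::ₘ b ::ₘ t)) :
    symb (a ::ₘ b ::ₘ t) h = symb (a ::ₘ (b - a) ::ₘ t) h1 + symb ((a - b) ::ₘ b ::ₘ t) h2 := by
  unfold symb
  change (QuotientAddGroup.mk _ : FreeAbelianGroup (Symb A n) ⧸ AddSubgroup.closure (blowupRels A n))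
    = QuotientAddGroup.mk (_ + _)
  rw [QuotientAddGroup.eq]
  have hm : (of (⟨a ::ₘ b ::ₘ t, h⟩ : Symb A n) - of ⟨a ::ₘ (b - a) ::ₘ t, h1⟩
      - of ⟨(a - b) ::ₘ b ::ₘ t, h2⟩) ∈ AddSubgroup.closure (blowupRels A n) :=
    AddSubgroup.subset_closure (Or.inl ⟨a, b, t, h, h1, h2, hab, rfl⟩)
  have := (AddSubgroup.closure (blowupRels A n)).neg_mem hm
  convert this using 1
  abel

lemma c5_rel1 (a b : ZMod 5) (hab : a ≠ b) (u v : ZMod 5) (hu : u ∈ ({a, b} : Multiset (ZMod 5)))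
    (huv : u * v = 1)
    (u1 v1 : ZMod 5) (hu1 : u1 ∈ ({a, b - a} : Multiset (ZMod 5))) (huv1 : u1 * v1 = 1)
    (u2 v2 : ZMod 5) (hu2 : u2 ∈ ({a - b, b} : Multiset (ZMod 5))) (huv2 : u2 * v2 = 1) :
    c5 a b u v hu huv = c5 a (b - a) u1 v1 hu1 huv1 + c5 (a - b) b u2 v2 hu2 huv2 := by
  have e : ∀ x y : ZMod 5, ({x, y} : Multiset (ZMod 5)) = x ::ₘ y ::ₘ 0 := fun _ _ => rfl
  have hA : Multiset.card (a ::ₘ b ::ₘ (0 : Multiset (ZMod 5))) = 2 ∧ Adm (a ::ₘ b ::ₘ 0) :=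
    ⟨by simp, (e a b) ▸ admU hu huv⟩
  have hB : Multiset.card (a ::ₘ (b - a) ::ₘ (0 : Multiset (ZMod 5))) = 2
      ∧ Adm (a ::ₘ (b - a) ::ₘ 0) := ⟨by simp, (e a (b - a)) ▸ admU hu1 huv1⟩
  have hC : Multiset.card ((a - b) ::ₘ b ::ₘ (0 : Multiset (ZMod 5))) = 2
      ∧ Adm ((a - b) ::ₘ b ::ₘ 0) := ⟨by simp, (e (a - b) b) ▸ admU hu2 huv2⟩
  unfold c5
  calc symb {a, b} ⟨by simp, admU hu huv⟩
      = symb (a ::ₘ b ::ₘ 0) hA := symb_congr (e a b) _ _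
    _ = symb (a ::ₘ (b - a) ::ₘ 0) hB + symb ((a - b) ::ₘ b ::ₘ 0) hC := rel1 a b 0 hab hA hB hC
    _ = symb {a, b - a} ⟨by simp, admU hu1 huv1⟩ + symb {a - b, b} ⟨by simp, admU hu2 huv2⟩ :=
        congrArg₂ (· + ·) (symb_congr (e a (b - a)).symm hB _) (symb_congr (e (a - b) b).symm hC _)

lemma c5_eq (a b a' b' : ZMod 5) (u v : ZMod 5) (hu : u ∈ ({a, b} : Multiset (ZMod 5)))
    (huv : u * v = 1) (u' v' : ZMod 5) (hu' : u' ∈ ({a', b'} : Multiset (ZMod 5)))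
    (huv' : u' * v' = 1) (e : ({a, b} : Multiset (ZMod 5)) = {a', b'}) :
    c5 a b u v hu huv = c5 a' b' u' v' hu' huv' := symb_congr e _ _

/-- the invariant `β(M̄₀,₅ ⟲ C₅)`, the sum of the eight
tangent-weight symbols `[1,1]+[1,2]+[1,3]+[2,2]+[2,4]+[3,3]+[3,4]+[4,4]` at the
eight fixed points, vanishes in `𝓑₂(C₅)`. -/
theorem beta_M05_C5_vanishes :
    c5 1 1 1 1 (by decide) (by decide) + c5 1 2 1 1 (by decide) (by decide) +
    c5 1 3 1 1 (by decide) (by decide) + c5 2 2 2 3 (by decide) (by decide) +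
    c5 2 4 2 3 (by decide) (by decide) + c5 3 3 3 2 (by decide) (by decide) +
    c5 3 4 3 2 (by decide) (by decide) + c5 4 4 4 4 (by decide) (by decide) = 0 := by
  -- abbreviations
  have h14 : c5 1 4 1 1 (by decide) (by decide) = 0 := by
    have := c5_rel1 0 4 (by decide) 4 4 (by decide) (by decide)
      4 4 (by decide) (by decide) 1 1 (by decide) (by decide)
    rw [c5_eq 0 (4-0) 0 4 4 4 (by decide) (by decide) 4 4 (by decide) (by decide) (by decide),
        c5_eq (0-4) 4 1 4 1 1 (by decide) (by decide) 1 1 (by decide) (by decide) (by decide)]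
      at this
    exact (left_eq_add.mp this)
  have h32 : c5 3 2 3 2 (by decide) (by decide) = 0 := by
    have := c5_rel1 0 3 (by decide) 3 2 (by decide) (by decide)
      3 2 (by decide) (by decide) 2 3 (by decide) (by decide)
    rw [c5_eq 0 (3-0) 0 3 3 2 (by decide) (by decide) 3 2 (by decide) (by decide) (by decide),
        c5_eq (0-3) 3 3 2 2 3 (by decide) (by decide) 3 2 (by decide) (by decide) (by decide)]
      at this
    exact (left_eq_add.mp this)
  have E3 : c5 1 2 1 1 (by decide) (by decide)
      = c5 1 1 1 1 (by decide) (by decide) + c5 2 4 2 3 (by decide) (by decide) := by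
    have := c5_rel1 1 2 (by decide) 1 1 (by decide) (by decide)
      1 1 (by decide) (by decide) 2 3 (by decide) (by decide)
    rw [c5_eq 1 (2-1) 1 1 1 1 (by decide) (by decide) 1 1 (by decide) (by decide) (by decide),
        c5_eq (1-2) 2 2 4 2 3 (by decide) (by decide) 2 3 (by decide) (by decide) (by decide)]
      at this
    exact this
  have E4 : c5 1 3 1 1 (by decide) (by decide)
      = c5 1 2 1 1 (by decide) (by decide) + c5 3 3 3 2 (by decide) (by decide) := by
    have := c5_rel1 1 3 (by decide) 1 1 (by decide) (by decide)
      1 1 (by decide) (by decide) 3 2 (by decide) (by decide)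
    rw [c5_eq 1 (3-1) 1 2 1 1 (by decide) (by decide) 1 1 (by decide) (by decide) (by decide),
        c5_eq (1-3) 3 3 3 3 2 (by decide) (by decide) 3 2 (by decide) (by decide) (by decide)]
      at this
    exact this
  have E5 : c5 1 4 1 1 (by decide) (by decide)
      = c5 1 3 1 1 (by decide) (by decide) + c5 2 4 2 3 (by decide) (by decide) := by
    have := c5_rel1 1 4 (by decide) 1 1 (by decide) (by decide)
      1 1 (by decide) (by decide) 2 3 (by decide) (by decide)
    rw [c5_eq 1 (4-1) 1 3 1 1 (by decide) (by decide) 1 1 (by decide) (by decide) (by decide),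
        c5_eq (1-4) 4 2 4 2 3 (by decide) (by decide) 2 3 (by decide) (by decide) (by decide)]
      at this
    exact this
  have E6 : c5 2 4 2 3 (by decide) (by decide)
      = c5 2 2 2 3 (by decide) (by decide) + c5 3 4 3 2 (by decide) (by decide) := by
    have := c5_rel1 2 4 (by decide) 2 3 (by decide) (by decide)
      2 3 (by decide) (by decide) 3 2 (by decide) (by decide)
    rw [c5_eq 2 (4-2) 2 2 2 3 (by decide) (by decide) 2 3 (by decide) (by decide) (by decide),
        c5_eq (2-4) 4 3 4 3 2 (by decide) (by decide) 3 2 (by decide) (by decide) (by decide)]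
      at this
    exact this
  have E7 : c5 3 2 3 2 (by decide) (by decide)
      = c5 3 4 3 2 (by decide) (by decide) + c5 1 2 1 1 (by decide) (by decide) := by
    have := c5_rel1 3 2 (by decide) 3 2 (by decide) (by decide)
      3 2 (by decide) (by decide) 1 1 (by decide) (by decide)
    rw [c5_eq 3 (2-3) 3 4 3 2 (by decide) (by decide) 3 2 (by decide) (by decide) (by decide),
        c5_eq (3-2) 2 1 2 1 1 (by decide) (by decide) 1 1 (by decide) (by decide) (by decide)]
      at this
    exact this
  have E8 : c5 3 4 3 2 (by decide) (by decide)
      = c5 1 3 1 1 (by decide) (by decide) + c5 4 4 4 4 (by decide) (by decide) := by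
    have := c5_rel1 3 4 (by decide) 3 2 (by decide) (by decide)
      1 1 (by decide) (by decide) 4 4 (by decide) (by decide)
    rw [c5_eq 3 (4-3) 1 3 1 1 (by decide) (by decide) 1 1 (by decide) (by decide) (by decide),
        c5_eq (3-4) 4 4 4 4 4 (by decide) (by decide) 4 4 (by decide) (by decide) (by decide)]
      at this
    exact this
  -- now solve linearly
  set b2 := c5 1 2 1 1 (by decide) (by decide) with hb2
  set x := c5 2 4 2 3 (by decide) (by decide) with hx
  have h13 : c5 1 3 1 1 (by decide) (by decide) = -x :=
    eq_neg_of_add_eq_zero_left (by rw [← E5, h14])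
  have h34 : c5 3 4 3 2 (by decide) (by decide) = -b2 :=
    eq_neg_of_add_eq_zero_left (by rw [← E7, h32])
  have h11 : c5 1 1 1 1 (by decide) (by decide) = b2 - x := eq_sub_of_add_eq E3.symm
  have h33 : c5 3 3 3 2 (by decide) (by decide) = -x - b2 := by
    have : b2 + c5 3 3 3 2 (by decide) (by decide) = -x := by rw [← E4, h13]
    exact eq_sub_of_add_eq ((add_comm _ _).trans this)
  have h22 : c5 2 2 2 3 (by decide) (by decide) = x + b2 := by
    have := eq_sub_of_add_eq E6.symm
    rw [this, h34]; abel
  have h44 : c5 4 4 4 4 (by decide) (by decide) = -b2 + x := by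
    have : c5 1 3 1 1 (by decide) (by decide) + c5 4 4 4 4 (by decide) (by decide) = -b2 := by
      rw [← E8, h34]
    rw [h13] at this
    have := eq_sub_of_add_eq ((add_comm _ _).trans this)
    rw [this]; abel
  rw [h11, h13, h22, h33, h34, h44]
  abel
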